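/- Let W be finite with longest element w₀, and let τ : W → Aˣ be a multiplicative labelling. Then ∑_{w∈W} τ(w)^{-1} = τ(w₀)^{-1} · ∑_{w∈W} τ(w). -/

import Mathlib

namespace SumInvLabelling

open CoxeterSystem List

variable {B : Type*} {W : Type*} [Group W] [DecidableEq W] {M : CoxeterMatrix B}
  (cs : CoxeterSystem M W)

local prefix:100 "s" => cs.simple
local prefix:100 "π" => cs.wordProd
local prefix:100 "ℓ" => cs.length

theorem conj_eq_iff (u t x : W) : u * t * u⁻¹ = x ↔ t = u⁻¹ * x * u := by
  constructor
  · rintro rfl; group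
  · rintro rfl; group

/-- The function underlying the permutation representation of `W` on `W × ℤˣ`. -/
def sigmaFun (i : B) : W × ℤˣ → W × ℤˣ :=
  fun x => (s i * x.1 * s i, if x.1 = s i then -x.2 else x.2)

theorem simple_conj_simple (i : B) (t : W) : s i * (s i * t * s i) * s i = t := by
  rw [show s i * (s i * t * s i) * s i = (s i * s i) * t * (s i * s i) by group,
    cs.simple_mul_simple_self, one_mul, mul_one]

theorem simple_conj_eq_iff (i : B) (t x : W) : s i * t * s i = x ↔ t = s i * x * s i := by
  constructor
  · rintro rfl; rw [simple_conj_simple]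
  · rintro rfl; rw [simple_conj_simple]

theorem sigmaFun_involutive (i : B) : Function.Involutive (sigmaFun cs i) := by
  rintro ⟨t, e⟩
  have h2 : (s i * t * s i = s i) ↔ t = s i := by
    rw [simple_conj_eq_iff, cs.simple_mul_simple_self, one_mul]
  simp only [sigmaFun, simple_conj_simple, h2]
  split_ifs with h
  · simp
  · rfl

/-- The basic permutations generating the representation. -/
def sigma (i : B) : Equiv.Perm (W × ℤˣ) := (sigmaFun_involutive cs i).toPerm

theorem sigma_apply (i : B) (t : W) (e : ℤˣ) :
    sigma cs i (t, e) = (s i * t * s i, if t = s i then -e else e) := rfl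

theorem sigma_mul_sigma_apply (i j : B) (t : W) (e : ℤˣ) :
    (sigma cs i * sigma cs j) (t, e) =
      ((s i * s j) * t * (s i * s j)⁻¹,
        ((if t = s j then (-1 : ℤˣ) else 1) * (if t = s j * (s i * s j) then -1 else 1)) * e) := by
  rw [Equiv.Perm.mul_apply, sigma_apply, sigma_apply]
  have hiff : (s j * t * s j = s i) ↔ t = s j * (s i * s j) := by
    rw [simple_conj_eq_iff, ← mul_assoc]
  refine Prod.ext ?_ ?_
  · show s i * (s j * t * s j) * s i = _
    rw [mul_inv_rev, cs.inv_simple, cs.inv_simple]; group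
  · show (if s j * t * s j = s i then _ else _) = _
    simp only [hiff]
    split_ifs <;> simp

theorem simple_mul_pow (i j : B) (k : ℕ) :
    s j * (s i * s j) ^ k = ((s i * s j) ^ k)⁻¹ * s j := by
  have hp : (s i * s j)⁻¹ = s j * s i := by
    rw [mul_inv_rev, cs.inv_simple, cs.inv_simple]
  have hp1 : s j * (s i * s j) = (s i * s j)⁻¹ * s j := by
    rw [hp]; group
  induction k with
  | zero => simp
  | succ n ih =>
      calc s j * (s i * s j) ^ (n + 1)
          = ((s i * s j) ^ n)⁻¹ * s j * (s i * s j) := by rw [pow_succ, ← mul_assoc, ih]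
        _ = ((s i * s j) ^ n)⁻¹ * ((s i * s j)⁻¹ * s j) := by rw [mul_assoc, hp1]
        _ = ((s i * s j) ^ (n + 1))⁻¹ * s j := by
            rw [← mul_assoc, ← mul_inv_rev, ← pow_succ']

theorem sigma_mul_sigma_pow_apply (i j : B) (k : ℕ) (t : W) (e : ℤˣ) :
    ((sigma cs i * sigma cs j) ^ k) (t, e) =
      ((s i * s j) ^ k * t * ((s i * s j) ^ k)⁻¹,
        (∏ r ∈ Finset.range (2 * k),
          (if t = s j * (s i * s j) ^ r then (-1 : ℤˣ) else 1)) * e) := by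
  induction k with
  | zero => simp
  | succ n ih =>
      rw [pow_succ' (sigma cs i * sigma cs j), Equiv.Perm.mul_apply, ih, sigma_mul_sigma_apply]
      have e1 : ((s i * s j) ^ n)⁻¹ * s j * (s i * s j) ^ n = s j * (s i * s j) ^ (2 * n) := by
        rw [← simple_mul_pow, mul_assoc, ← pow_add, two_mul]
      have e2 : ((s i * s j) ^ n)⁻¹ * (s j * (s i * s j)) * (s i * s j) ^ n
          = s j * (s i * s j) ^ (2 * n + 1) := by
        calc ((s i * s j) ^ n)⁻¹ * (s j * (s i * s j)) * (s i * s j) ^ n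
            = ((s i * s j) ^ n)⁻¹ * s j * ((s i * s j) * (s i * s j) ^ n) := by
              simp only [mul_assoc]
          _ = s j * (s i * s j) ^ n * ((s i * s j) * (s i * s j) ^ n) := by rw [← simple_mul_pow]
          _ = s j * (s i * s j) ^ (2 * n + 1) := by
              rw [← pow_succ', mul_assoc, ← pow_add, show n + (n + 1) = 2 * n + 1 by ring]
      have c1 : ((s i * s j) ^ n * t * ((s i * s j) ^ n)⁻¹ = s j)
          ↔ t = s j * (s i * s j) ^ (2 * n) := by
        rw [conj_eq_iff, e1]
      have c2 : ((s i * s j) ^ n * t * ((s i * s j) ^ n)⁻¹ = s j * (s i * s j))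
          ↔ t = s j * (s i * s j) ^ (2 * n + 1) := by
        rw [conj_eq_iff, e2]
      refine Prod.ext ?_ ?_
      · show (s i * s j) * ((s i * s j) ^ n * t * ((s i * s j) ^ n)⁻¹) * (s i * s j)⁻¹ = _
        rw [pow_succ' (s i * s j) n]
        simp only [mul_inv_rev, mul_assoc]
      · show ((if _ then (-1:ℤˣ) else 1) * (if _ then (-1:ℤˣ) else 1)) * (_ * e) = _
        simp only [c1, c2, show 2 * (n + 1) = (2 * n) + 1 + 1 by ring, Finset.prod_range_succ]
        generalize (if t = s j * (s i * s j) ^ (2*n) then (-1:ℤˣ) else 1) = a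
        generalize (if t = s j * (s i * s j) ^ (2*n+1) then (-1:ℤˣ) else 1) = b
        generalize (∏ r ∈ Finset.range (2*n),
          (if t = s j * (s i * s j) ^ r then (-1:ℤˣ) else 1)) = P
        rw [show a * b * (P * e) = P * a * b * e by
          simp only [mul_comm, mul_left_comm, mul_assoc]]
  
theorem sigma_isLiftable : CoxeterMatrix.IsLiftable M (sigma cs) := by
  intro i j
  ext x : 1
  obtain ⟨t, e⟩ := x
  rw [sigma_mul_sigma_pow_apply, cs.simple_mul_simple_pow]
  have hper : ∀ r : ℕ, (s i * s j) ^ (M i j + r) = (s i * s j) ^ r := by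
    intro r
    rw [pow_add, cs.simple_mul_simple_pow, one_mul]
  have hsplit : (∏ r ∈ Finset.range (2 * M i j),
      (if t = s j * (s i * s j) ^ r then (-1 : ℤˣ) else 1)) = 1 := by
    rw [two_mul, Finset.prod_range_add]
    have heq : ∀ r ∈ Finset.range (M i j),
        (if t = s j * (s i * s j) ^ (M i j + r) then (-1:ℤˣ) else 1)
        = (if t = s j * (s i * s j) ^ r then (-1:ℤˣ) else 1) := by
      intro r _
      rw [hper r]
    rw [Finset.prod_congr rfl heq, ← sq]
    rcases Int.units_eq_one_or (∏ r ∈ Finset.range (M i j),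
        (if t = s j * (s i * s j) ^ r then (-1:ℤˣ) else 1)) with h | h <;> rw [h] <;> decide
  rw [hsplit]
  simp

/-- The permutation representation of `W` on `W × ℤˣ`. -/
noncomputable def Phi : W →* Equiv.Perm (W × ℤˣ) := cs.lift ⟨sigma cs, sigma_isLiftable cs⟩

/-- The sign cocycle. -/
noncomputable def eta (w t : W) : ℤˣ := (Phi cs w (t, 1)).2

theorem Phi_simple (i : B) : Phi cs (s i) = sigma cs i :=
  cs.lift_apply_simple (sigma_isLiftable cs) i

theorem Phi_wordProd (ω : List B) (t : W) (e : ℤˣ) :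
    Phi cs (π ω) (t, e) = ((π ω) * t * (π ω)⁻¹, (Phi cs (π ω) (t, 1)).2 * e) := by
  induction ω generalizing t e with
  | nil => simp [cs.wordProd_nil]
  | cons i ω ih =>
      rw [cs.wordProd_cons, map_mul, Phi_simple]
      simp only [Equiv.Perm.mul_apply]
      rw [ih t e, ih t 1]
      simp only [sigma_apply, mul_one, Prod.mk.injEq]
      constructor
      · rw [mul_inv_rev, cs.inv_simple]
        simp only [mul_assoc]
      · split_ifs with h
        · rw [neg_mul]
        · rfl

theorem Phi_apply (w t : W) (e : ℤˣ) : Phi cs w (t, e) = (w * t * w⁻¹, eta cs w t * e) := by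
  obtain ⟨ω, -, hw⟩ := cs.exists_reduced_word w
  subst hw
  exact Phi_wordProd cs ω t e

theorem eta_one (t : W) : eta cs 1 t = 1 := by
  rw [eta, map_one]; rfl

theorem eta_mul (u v t : W) : eta cs (u * v) t = eta cs u (v * t * v⁻¹) * eta cs v t := by
  have h := Phi_apply cs (u * v) t 1
  rw [map_mul, Equiv.Perm.mul_apply, Phi_apply cs v t 1, mul_one,
    Phi_apply cs u (v * t * v⁻¹)] at h
  have h2 := congrArg Prod.snd h
  simp only [mul_one] at h2
  try exact h2.symm

theorem eta_simple (i : B) (t : W) : eta cs (s i) t = if t = s i then -1 else 1 := by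
  rw [eta, Phi_simple]
  rfl

theorem eta_wordProd (ω : List B) (t : W) :
    eta cs (π ω) t = (-1 : ℤˣ) ^ (List.count t (cs.rightInvSeq ω)) := by
  induction ω with
  | nil => simp [cs.wordProd_nil, eta_one]
  | cons i ω ih =>
      rw [cs.wordProd_cons, eta_mul, ih, eta_simple]
      have hris : cs.rightInvSeq (i :: ω) = ((π ω)⁻¹ * s i * π ω) :: cs.rightInvSeq ω := rfl
      rw [hris]
      have hcond : (π ω * t * (π ω)⁻¹ = s i) ↔ t = (π ω)⁻¹ * s i * (π ω) := by
        rw [conj_eq_iff, mul_assoc]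
      rw [List.count_cons]
      simp only [beq_iff_eq]
      rcases eq_or_ne t ((π ω)⁻¹ * s i * (π ω)) with h | h
      · rw [if_pos (hcond.mpr h), if_pos h.symm, pow_succ, mul_comm]
      · rw [if_neg (fun hc => h (hcond.mp hc)), if_neg (fun hc => h hc.symm), add_zero, one_mul]

theorem eta_self {t : W} (ht : cs.IsReflection t) : eta cs t t = -1 := by
  obtain ⟨u, i, rfl⟩ := ht
  have h1 : eta cs u⁻¹ (u * s i * u⁻¹) * eta cs u (s i) = 1 := by
    have h := eta_mul cs u⁻¹ u (s i)
    rw [inv_mul_cancel, eta_one] at h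
    exact h.symm
  have e1 : ∀ x : W, eta cs (u * s i * u⁻¹) x
      = eta cs u ((s i * u⁻¹) * x * (s i * u⁻¹)⁻¹) * eta cs (s i * u⁻¹) x := by
    intro x
    rw [show u * s i * u⁻¹ = u * (s i * u⁻¹) by rw [mul_assoc]]
    exact eta_mul cs u (s i * u⁻¹) x
  rw [e1, eta_mul cs (s i) u⁻¹,
    show (s i * u⁻¹) * (u * s i * u⁻¹) * (s i * u⁻¹)⁻¹ = s i by group,
    show u⁻¹ * (u * s i * u⁻¹) * u⁻¹⁻¹ = s i by group,
    eta_simple, if_pos rfl]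
  have : eta cs u (s i) * (-1 * eta cs u⁻¹ (u * s i * u⁻¹))
      = -(eta cs u⁻¹ (u * s i * u⁻¹) * eta cs u (s i)) := by
    rw [neg_one_mul, mul_neg, mul_comm]
  rw [this, h1]

theorem isRightInversion_iff_eta {w t : W} (ht : cs.IsReflection t) :
    cs.IsRightInversion w t ↔ eta cs w t = -1 := by
  have mul_eta : ∀ v : W, eta cs (v * t) t = -eta cs v t := by
    intro v
    rw [eta_mul, show t * t * t⁻¹ = t by rw [ht.mul_self, one_mul, ht.inv], eta_self cs ht,
      mul_comm, neg_one_mul]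
  have dir : ∀ v : W, eta cs v t = -1 → ℓ (v * t) < ℓ v := by
    intro v hv
    obtain ⟨ω, hω, hv'⟩ := cs.exists_reduced_word v
    subst hv'
    have hred : cs.IsReduced ω := by unfold CoxeterSystem.IsReduced; exact hω
    rw [eta_wordProd] at hv
    have hcount : t ∈ cs.rightInvSeq ω := by
      by_contra hc
      have : List.count t (cs.rightInvSeq ω) = 0 := List.count_eq_zero_of_not_mem hc
      rw [this, pow_zero] at hv
      exact absurd hv (by decide)
    exact (cs.isRightInversion_of_mem_rightInvSeq hred hcount).2
  constructor
  · rintro ⟨-, hlt⟩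
    rcases Int.units_eq_one_or (eta cs w t) with h | h
    · exfalso
      have h2 : eta cs (w * t) t = -1 := by rw [mul_eta, h]
      have h3 := dir (w * t) h2
      rw [mul_assoc, ht.mul_self, mul_one] at h3
      omega
    · exact h
  · intro h
    exact ⟨ht, dir w h⟩

theorem length_mul_of_maximal (w₀ : W) (hw₀ : ∀ w : W, ℓ w ≤ ℓ w₀) (v : W) :
    ℓ (w₀ * v) + ℓ v = ℓ w₀ := by
  generalize hn : ℓ v = n
  induction n generalizing v with
  | zero =>
      rw [cs.length_eq_zero_iff] at hn
      subst hn; simp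
  | succ n ih =>
      have hv1 : v ≠ 1 := by
        intro h; rw [h, cs.length_one] at hn; omega
      obtain ⟨i, hi⟩ := cs.exists_rightDescent_of_ne_one hv1
      obtain ⟨u, hu⟩ : ∃ u : W, u = v * s i := ⟨_, rfl⟩
      have hvu : v = u * s i := by rw [hu, mul_assoc, cs.simple_mul_simple_self, mul_one]
      have h1 : ℓ u < ℓ v := hu ▸ hi
      have hlu : ℓ u = n := by
        rcases cs.length_mul_simple u i with h | h <;> rw [← hvu] at h <;> omega
      have hnotdesc : ¬ cs.IsRightDescent u i := by
        intro h
        have : ℓ (u * s i) < ℓ u := h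
        rw [← hvu, hn, hlu] at this
        omega
      have hetau : eta cs u (s i) = 1 := by
        rcases Int.units_eq_one_or (eta cs u (s i)) with h | h
        · exact h
        · exfalso
          apply hnotdesc
          rw [← cs.isRightInversion_simple_iff_isRightDescent]
          exact (isRightInversion_iff_eta cs (cs.isReflection_simple i)).mpr h
      have hw0refl : eta cs w₀ (u * s i * u⁻¹) = -1 := by
        have hrefl : cs.IsReflection (u * s i * u⁻¹) := (cs.isReflection_simple i).conj u
        apply (isRightInversion_iff_eta cs hrefl).mp
        exact ⟨hrefl, lt_of_le_of_ne (hw₀ _) (hrefl.length_mul_left_ne w₀)⟩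
      have hkey : eta cs (w₀ * u) (s i) = -1 := by
        rw [eta_mul, hetau, hw0refl, mul_one]
      have hdesc : ℓ (w₀ * u * s i) < ℓ (w₀ * u) :=
        ((isRightInversion_iff_eta cs (cs.isReflection_simple i)).mpr hkey).2
      have ihu := ih u hlu
      have h2 : ℓ (w₀ * v) = ℓ (w₀ * u * s i) := by rw [hvu, mul_assoc]
      rcases cs.length_mul_simple (w₀ * u) i with h | h <;> omega

end SumInvLabelling

/-- For a finite Coxeter system `(W, S)` with longest element `w₀` and a
multiplicative labelling `τ : W → Aˣ`, one has
`∑_{w ∈ W} τ(w)⁻¹ = τ(w₀)⁻¹ * ∑_{w ∈ W} τ(w)`. -/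
theorem sum_of_inverse_labelling
    {B : Type*} {W : Type*} [Group W] [Fintype W] {M : CoxeterMatrix B}
    (cs : CoxeterSystem M W)
    {A : Type*} [Ring A] (τ : W → Aˣ)
    (hτ : ∀ v w : W, cs.length (v * w) = cs.length v + cs.length w →
      τ (v * w) = τ v * τ w)
    (w₀ : W) (hw₀ : ∀ w : W, cs.length w ≤ cs.length w₀) :
    ∑ w : W, (((τ w)⁻¹ : Aˣ) : A) = (((τ w₀)⁻¹ : Aˣ) : A) * ∑ w : W, (τ w : A) := by
  letI : DecidableEq W := Classical.decEq W
  have key : ∀ w : W, ((τ w)⁻¹ : Aˣ) = (τ w₀)⁻¹ * τ (w₀ * w⁻¹) := by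
    intro w
    have hlen : cs.length ((w₀ * w⁻¹) * w) = cs.length (w₀ * w⁻¹) + cs.length w := by
      have h := SumInvLabelling.length_mul_of_maximal cs w₀ hw₀ w⁻¹
      rw [cs.length_inv] at h
      rw [mul_assoc, inv_mul_cancel, mul_one]
      omega
    have h := hτ (w₀ * w⁻¹) w hlen
    rw [mul_assoc, inv_mul_cancel, mul_one] at h
    rw [h, mul_inv_rev, mul_assoc, inv_mul_cancel, mul_one]
  calc ∑ w : W, (((τ w)⁻¹ : Aˣ) : A)
      = ∑ w : W, (((τ w₀)⁻¹ : Aˣ) : A) * ((τ (w₀ * w⁻¹) : Aˣ) : A) := by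
        refine Finset.sum_congr rfl fun w _ => ?_
        rw [key w]; push_cast; ring_nf
    _ = (((τ w₀)⁻¹ : Aˣ) : A) * ∑ w : W, ((τ (w₀ * w⁻¹) : Aˣ) : A) := by
        rw [Finset.mul_sum]
    _ = (((τ w₀)⁻¹ : Aˣ) : A) * ∑ w : W, ((τ w : Aˣ) : A) := by
        congr 1
        exact Fintype.sum_equiv ((Equiv.inv W).trans (Equiv.mulLeft w₀))
          (fun w => ((τ (w₀ * w⁻¹) : Aˣ) : A)) (fun w => ((τ w : Aˣ) : A)) (fun w => rfl)
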